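/- If A and B are disjoint sets of words of length n such that A ∪ B is mutually uncorrelated, then the set C = {XY : X ∈ A, Y ∈ B} of concatenations is a mutually uncorrelated set of words of length 2n. -/

import Mathlib

/-- A word `X` is self-uncorrelated if no proper nonempty prefix of `X`
is also a suffix of `X`. -/
def selfUncorr {α : Type*} (X : List α) : Prop :=
  ∀ k : ℕ, 0 < k → k < X.length → X.take k ≠ X.drop (X.length - k)

/-- A set of words is mutually uncorrelated if each word is self-uncorrelated and
for any two distinct words, no nonempty prefix of one equals a suffix of the other. -/
def mutUncorr {α : Type*} (S : Set (List α)) : Prop :=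
  (∀ X ∈ S, selfUncorr X) ∧
  ∀ X ∈ S, ∀ Y ∈ S, X ≠ Y →
    ∀ k : ℕ, 0 < k → k ≤ X.length → k ≤ Y.length →
      X.take k ≠ Y.drop (Y.length - k)

lemma key3 {α : Type*} {n : ℕ} {A B : Set (List α)} (hd : Disjoint A B)
    (hlen : ∀ X ∈ A ∪ B, X.length = n) (h : mutUncorr (A ∪ B))
    {X₁ Y₁ X₂ Y₂ : List α} (hX₁ : X₁ ∈ A) (hY₁ : Y₁ ∈ B)
    (hX₂ : X₂ ∈ A) (hY₂ : Y₂ ∈ B) {k : ℕ} (hk : 0 < k) (hk2 : k < 2 * n) :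
    (X₁ ++ Y₁).take k ≠ (X₂ ++ Y₂).drop ((X₂ ++ Y₂).length - k) := by
  have hX₁l : X₁.length = n := hlen _ (Or.inl hX₁)
  have hY₁l : Y₁.length = n := hlen _ (Or.inr hY₁)
  have hX₂l : X₂.length = n := hlen _ (Or.inl hX₂)
  have hY₂l : Y₂.length = n := hlen _ (Or.inr hY₂)
  have hZl : (X₂ ++ Y₂).length = 2 * n := by
    simp [hX₂l, hY₂l]; omega
  intro H
  rcases le_or_gt k n with hkn | hkn
  · -- prefix within X₁, suffix within Y₂
    have h1 : (X₁ ++ Y₁).take k = X₁.take k :=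
      List.take_append_of_le_length (by omega)
    have h2 : (X₂ ++ Y₂).drop ((X₂ ++ Y₂).length - k) = Y₂.drop (Y₂.length - k) := by
      rw [hZl]
      have e : 2 * n - k = X₂.length + (n - k) := by omega
      rw [e, List.drop_length_add_append, hY₂l]
    have hne : X₁ ≠ Y₂ := hd.ne_of_mem hX₁ hY₂
    exact h.2 X₁ (Or.inl hX₁) Y₂ (Or.inr hY₂) hne k hk (by omega) (by omega)
      (by rw [← h1, ← h2]; exact H)
  · -- overlap crosses the middle: compare first (k - n) characters
    set j := k - n with hj
    have hj0 : 0 < j := by omega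
    have hjn : j < n := by omega
    have hL : ((X₁ ++ Y₁).take k).take j = X₁.take j := by
      rw [List.take_take, min_eq_left (by omega),
        List.take_append_of_le_length (by omega)]
    have hR : (((X₂ ++ Y₂).drop ((X₂ ++ Y₂).length - k))).take j
        = X₂.drop (X₂.length - j) := by
      rw [hZl]
      have e : 2 * n - k = n - j := by omega
      rw [e]
      have e2 : (X₂ ++ Y₂).drop (n - j) = X₂.drop (n - j) ++ Y₂ :=
        List.drop_append_of_le_length (by omega)
      have e3 : (X₂.drop (n - j)).length = j := by
        simp [hX₂l]; omega
      rw [e2, List.take_append_of_le_length (by omega),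
        List.take_of_length_le (by omega), hX₂l]
    have Hj : X₁.take j = X₂.drop (X₂.length - j) := by
      rw [← hL, ← hR, H]
    by_cases heq : X₁ = X₂
    · subst heq
      exact h.1 X₁ (Or.inl hX₁) j hj0 (by omega) Hj
    · exact h.2 X₁ (Or.inl hX₁) X₂ (Or.inl hX₂) heq j hj0 (by omega) (by omega) Hj

/-- If `A` and `B` are disjoint sets of words of length `n` with `A ∪ B` mutually
uncorrelated, the set of concatenations `{XY : X ∈ A, Y ∈ B}` is a mutually
uncorrelated set of words of length `2n`. -/
theorem stmt3 {α : Type*} (n : ℕ) (A B : Set (List α)) (hd : Disjoint A B)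
    (hlen : ∀ X ∈ A ∪ B, X.length = n) (h : mutUncorr (A ∪ B)) :
    (∀ Z ∈ {Z : List α | ∃ X ∈ A, ∃ Y ∈ B, Z = X ++ Y}, Z.length = 2 * n) ∧
    mutUncorr {Z : List α | ∃ X ∈ A, ∃ Y ∈ B, Z = X ++ Y} := by
  have hlen2 : ∀ Z ∈ {Z : List α | ∃ X ∈ A, ∃ Y ∈ B, Z = X ++ Y},
      Z.length = 2 * n := by
    rintro Z ⟨X, hX, Y, hY, rfl⟩
    simp [hlen _ (Or.inl hX), hlen _ (Or.inr hY)]; omega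
  refine ⟨hlen2, ?_, ?_⟩
  · rintro Z ⟨X, hX, Y, hY, rfl⟩ k hk hk2
    have hZl : (X ++ Y).length = 2 * n := hlen2 _ ⟨X, hX, Y, hY, rfl⟩
    exact key3 hd hlen h hX hY hX hY hk (by omega)
  · rintro Z ⟨X₁, hX₁, Y₁, hY₁, rfl⟩ Z' ⟨X₂, hX₂, Y₂, hY₂, rfl⟩ hne k hk hk1 hk2
    have hZl : (X₂ ++ Y₂).length = 2 * n := hlen2 _ ⟨X₂, hX₂, Y₂, hY₂, rfl⟩
    have hZl1 : (X₁ ++ Y₁).length = 2 * n := hlen2 _ ⟨X₁, hX₁, Y₁, hY₁, rfl⟩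
    rcases lt_or_eq_of_le (hZl ▸ hk2) with hlt | heq
    · exact key3 hd hlen h hX₁ hY₁ hX₂ hY₂ hk hlt
    · intro H
      apply hne
      rwa [List.take_of_length_le (by omega), hZl, ← heq, Nat.sub_self,
        List.drop_zero] at H
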